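/- (Theorem 1) Let h, k, n be positive integers with k ≤ h and d_max ≤ h, and consider the fixed-rate Raptor ensemble with parameters (h,k,n): H is an (h−k)×h matrix over F₂ with i.i.d. uniform entries, G ∈ F₂^{h×n} is an independent random LT generator matrix. Then for every d ≥ 1 the expected number of intermediate words v ∈ F₂^h with Hv = 0 and wt(vᵀG) = d equals A_d = C(n,d)·2^{−(h−k)}·Σ_{l=1}^{h} C(h,l)·p_l^{d}·(1−p_l)^{n−d}. -/

import Mathlib

open Finset

/-- Probability that the LT column distribution on `F₂^h` produces the particular
column `c`. -/
noncomputable def colP (dmax : ℕ) (Ω : ℕ → ℝ) {h : ℕ} (c : Fin h → ZMod 2) : ℝ :=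
  if 1 ≤ hammingNorm c ∧ hammingNorm c ≤ dmax then
    Ω (hammingNorm c) / (h.choose (hammingNorm c)) else 0

/-- `p_{j,l} = Σ_{i odd, max(1, l+j−h) ≤ i ≤ min(l,j)} C(j,i)·C(h−j, l−i)/C(h,l)`. -/
noncomputable def pjl (h j l : ℕ) : ℝ :=
  ∑ i ∈ (Finset.Icc (max 1 (l + j - h)) (min l j)).filter (fun i => Odd i),
    ((j.choose i : ℝ) * ((h - j).choose (l - i) : ℝ)) / (h.choose l : ℝ)

/-- `p_l = Σ_{j=1}^{dmax} Ω_j · p_{j,l}`. -/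
noncomputable def pl (dmax : ℕ) (Ω : ℕ → ℝ) (h l : ℕ) : ℝ :=
  ∑ j ∈ Finset.Icc 1 dmax, Ω j * pjl h j l

section helper

section aux

lemma zmod2_cases : ∀ x : ZMod 2, x = 0 ∨ x = 1 := by decide

variable {h : ℕ}

def supp (c : Fin h → ZMod 2) : Finset (Fin h) := {i | c i ≠ 0}

lemma hN_eq (c : Fin h → ZMod 2) : hammingNorm c = (supp c).card := rfl

def toVec (S : Finset (Fin h)) : Fin h → ZMod 2 := fun i => if i ∈ S then 1 else 0

def suppEquiv : (Fin h → ZMod 2) ≃ Finset (Fin h) where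
  toFun := supp
  invFun := toVec
  left_inv c := by
    funext i
    rcases zmod2_cases (c i) with hx | hx <;> simp [toVec, supp, hx]
  right_inv S := by
    ext i
    simp only [supp, mem_filter, mem_univ, true_and, toVec]
    by_cases hi : i ∈ S <;> simp [hi]

lemma dot_eq (v c : Fin h → ZMod 2) :
    dotProduct v c = ((supp v ∩ supp c).card : ZMod 2) := by
  unfold dotProduct
  have key : ∀ i, v i * c i = if i ∈ supp v ∩ supp c then (1 : ZMod 2) else 0 := by
    intro i
    rcases zmod2_cases (v i) with hx | hx <;> rcases zmod2_cases (c i) with gx | gx <;>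
      simp [supp, hx, gx]
  simp only [key]
  rw [Finset.sum_ite_mem, Finset.univ_inter, Finset.sum_const, nsmul_eq_mul, mul_one]

lemma dot_ne_zero_iff (v c : Fin h → ZMod 2) :
    dotProduct v c ≠ 0 ↔ Odd ((supp v ∩ supp c).card) := by
  rw [dot_eq, Ne, ZMod.natCast_eq_zero_iff, Nat.two_dvd_ne_zero, Nat.odd_iff]

end aux

section more
variable {h : ℕ}

lemma sum_ite_card {β : Type*} [Fintype β] (P : β → Prop) [DecidablePred P] (x : ℝ) :
    ∑ b : β, (if P b then x else 0) = ((univ.filter P).card : ℝ) * x := by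
  rw [Finset.sum_ite, Finset.sum_const, Finset.sum_const_zero, add_zero, nsmul_eq_mul]

lemma count_inter (V : Finset (Fin h)) (j i : ℕ) (hij : i ≤ j) :
    (univ.filter (fun S : Finset (Fin h) => S.card = j ∧ (V ∩ S).card = i)).card
      = V.card.choose i * (h - V.card).choose (j - i) := by
  have hVc : (Vᶜ : Finset (Fin h)).card = h - V.card := by
    rw [Finset.card_compl, Fintype.card_fin]
  rw [← Finset.card_powersetCard i V, ← hVc, ← Finset.card_powersetCard (j - i) Vᶜ,
    ← Finset.card_product]
  apply Finset.card_nbij' (i := fun S => (V ∩ S, S \ V)) (j := fun P => P.1 ∪ P.2)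
  · intro S hS
    simp only [Finset.mem_coe, mem_filter, mem_univ, true_and] at hS
    obtain ⟨hSj, hSi⟩ := hS
    simp only [Finset.mem_coe, Finset.mem_product, Finset.mem_powersetCard]
    refine ⟨⟨Finset.inter_subset_left, hSi⟩, ?_, ?_⟩
    · intro x hx
      simp only [Finset.mem_sdiff] at hx
      simp [hx.2]
    · have : S \ V = S \ (V ∩ S) := by ext x; simp only [Finset.mem_sdiff, Finset.mem_inter]; tauto
      rw [this, Finset.card_sdiff_of_subset Finset.inter_subset_right, hSj, hSi]
  · rintro ⟨P, Q⟩ hPQ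
    simp only [Finset.mem_coe, Finset.mem_product, Finset.mem_powersetCard] at hPQ
    obtain ⟨⟨hPV, hPi⟩, hQV, hQi⟩ := hPQ
    have hdisj : Disjoint P Q := by
      refine Finset.disjoint_left.mpr fun x hxP hxQ => ?_
      exact (Finset.mem_compl.mp (hQV hxQ)) (hPV hxP)
    simp only [Finset.mem_coe, mem_filter, mem_univ, true_and]
    constructor
    · rw [Finset.card_union_of_disjoint hdisj, hPi, hQi]
      omega
    · have : V ∩ (P ∪ Q) = P := by
        ext x
        simp only [Finset.mem_inter, Finset.mem_union]
        constructor
        · rintro ⟨hxV, hxP | hxQ⟩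
          · exact hxP
          · exact absurd hxV (Finset.mem_compl.mp (hQV hxQ))
        · intro hxP; exact ⟨hPV hxP, Or.inl hxP⟩
      rw [this, hPi]
  · intro S hS
    ext x
    simp only [Finset.mem_union, Finset.mem_inter, Finset.mem_sdiff]
    tauto
  · rintro ⟨P, Q⟩ hPQ
    simp only [Finset.mem_coe, Finset.mem_product, Finset.mem_powersetCard] at hPQ
    obtain ⟨⟨hPV, hPi⟩, hQV, hQi⟩ := hPQ
    have h1 : V ∩ (P ∪ Q) = P := by
      ext x
      simp only [Finset.mem_inter, Finset.mem_union]
      constructor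
      · rintro ⟨hxV, hxP | hxQ⟩
        · exact hxP
        · exact absurd hxV (Finset.mem_compl.mp (hQV hxQ))
      · intro hxP; exact ⟨hPV hxP, Or.inl hxP⟩
    have h2 : (P ∪ Q) \ V = Q := by
      ext x
      simp only [Finset.mem_sdiff, Finset.mem_union]
      constructor
      · rintro ⟨hxP | hxQ, hxV⟩
        · exact absurd (hPV hxP) hxV
        · exact hxQ
      · intro hxQ; exact ⟨Or.inr hxQ, Finset.mem_compl.mp (hQV hxQ)⟩
    simp [h1, h2]

lemma hcount (j : ℕ) :
    (univ.filter (fun S : Finset (Fin h) => S.card = j)).card = h.choose j := by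
  have := count_inter (∅ : Finset (Fin h)) j 0 (Nat.zero_le _)
  simpa using this

lemma choose4 {l j i : ℕ} (hl : l ≤ h) (hj : j ≤ h) (hil : i ≤ l) (hij : i ≤ j)
    (hlj : l + j ≤ h + i) :
    h.choose l * (l.choose i * (h - l).choose (j - i))
      = h.choose j * (j.choose i * (h - j).choose (l - i)) := by
  have e1 : h.choose l * l.choose i = h.choose i * (h - i).choose (l - i) :=
    Nat.choose_mul hil
  have e2 : h.choose j * j.choose i = h.choose i * (h - i).choose (j - i) :=
    Nat.choose_mul hij
  set m := h - i with hm
  set a := l - i with ha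
  set b := j - i with hb
  have hab : a + b ≤ m := by omega
  have hml : h - l = m - a := by omega
  have hmj : h - j = m - b := by omega
  have e3 : m.choose (a + b) * (a + b).choose a = m.choose a * (m - a).choose b := by
    have := Nat.choose_mul (n := m) (k := a + b) (s := a) (Nat.le_add_right a b)
    simpa using this
  have e4 : m.choose (a + b) * (a + b).choose b = m.choose b * (m - b).choose a := by
    have := Nat.choose_mul (n := m) (k := a + b) (s := b) (Nat.le_add_left b a)
    have hr : a + b - b = a := by omega
    rw [hr] at this
    exact this
  have e5 : (a + b).choose a = (a + b).choose b := Nat.choose_symm_add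
  calc h.choose l * (l.choose i * (h - l).choose (j - i))
      = (h.choose l * l.choose i) * (h - l).choose (j - i) := by ring
    _ = (h.choose i * m.choose a) * (m - a).choose b := by rw [e1, hml]
    _ = h.choose i * (m.choose a * (m - a).choose b) := by ring
    _ = h.choose i * (m.choose (a + b) * (a + b).choose a) := by rw [e3]
    _ = h.choose i * (m.choose (a + b) * (a + b).choose b) := by rw [e5]
    _ = h.choose i * (m.choose b * (m - b).choose a) := by rw [e4]
    _ = (h.choose i * m.choose b) * (m - b).choose a := by ring
    _ = (h.choose j * j.choose i) * (h - j).choose (l - i) := by rw [e2, hmj]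
    _ = h.choose j * (j.choose i * (h - j).choose (l - i)) := by ring

lemma Nval (V : Finset (Fin h)) (j : ℕ) :
    (univ.filter (fun S : Finset (Fin h) => S.card = j ∧ Odd ((V ∩ S).card))).card
      = ∑ i ∈ (Finset.Icc (max 1 (V.card + j - h)) (min V.card j)).filter (fun i => Odd i),
          V.card.choose i * (h - V.card).choose (j - i) := by
  rw [Finset.card_eq_sum_card_fiberwise
    (f := fun S => (V ∩ S).card)
    (t := (Finset.Icc (max 1 (V.card + j - h)) (min V.card j)).filter (fun i => Odd i)) ?_]
  · refine Finset.sum_congr rfl fun i hi => ?_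
    have hOdd : Odd i := (mem_filter.mp hi).2
    have hij : i ≤ j := le_trans (mem_Icc.mp (mem_filter.mp hi).1).2 (min_le_right _ _)
    rw [← count_inter V j i hij]
    congr 1
    ext S
    simp only [mem_filter, mem_univ, true_and]
    constructor
    · rintro ⟨⟨h1, _⟩, h3⟩; exact ⟨h1, h3⟩
    · rintro ⟨h1, h3⟩; exact ⟨⟨h1, h3 ▸ hOdd⟩, h3⟩
  · intro S hS
    simp only [Finset.mem_coe, mem_filter, mem_univ, true_and] at hS
    obtain ⟨hSj, hodd⟩ := hS
    have h1 : 1 ≤ (V ∩ S).card := hodd.pos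
    have h2 : (V ∩ S).card ≤ V.card := Finset.card_le_card Finset.inter_subset_left
    have h3 : (V ∩ S).card ≤ S.card := Finset.card_le_card Finset.inter_subset_right
    have h4 : (V ∪ S).card + (V ∩ S).card = V.card + S.card :=
      Finset.card_union_add_card_inter V S
    have h5 : (V ∪ S).card ≤ h := by
      have := Finset.card_le_univ (V ∪ S)
      simpa using this
    simp only [Finset.mem_coe, mem_filter, mem_Icc, hodd, and_true]
    omega
lemma colP_eq_supp (dmax : ℕ) (Ω : ℕ → ℝ) (c : Fin h → ZMod 2) :
    colP dmax Ω c = if 1 ≤ (supp c).card ∧ (supp c).card ≤ dmax then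
      Ω (supp c).card / (h.choose (supp c).card) else 0 := rfl

lemma sum_colP_one (dmax : ℕ) (Ω : ℕ → ℝ) (hΩsum : ∑ j ∈ Finset.Icc 1 dmax, Ω j = 1)
    (hdh : dmax ≤ h) :
    ∑ c : Fin h → ZMod 2, colP dmax Ω c = 1 := by
  classical
  rw [Fintype.sum_equiv (suppEquiv (h := h))
    (fun c => colP dmax Ω c)
    (fun S => if 1 ≤ S.card ∧ S.card ≤ dmax then Ω S.card / (h.choose S.card) else 0)
    (fun c => colP_eq_supp dmax Ω c)]
  have expand : ∀ S : Finset (Fin h),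
      (if 1 ≤ S.card ∧ S.card ≤ dmax then Ω S.card / (h.choose S.card) else 0)
        = ∑ j ∈ Finset.Icc 1 dmax, if S.card = j then Ω j / h.choose j else 0 := by
    intro S
    rw [Finset.sum_ite_eq]
    simp only [mem_Icc]
  simp_rw [expand]
  rw [Finset.sum_comm]
  have inner : ∀ j : ℕ, (∑ S : Finset (Fin h), if S.card = j then Ω j / (h.choose j : ℝ) else 0)
      = (h.choose j : ℝ) * (Ω j / (h.choose j : ℝ)) := by
    intro j
    rw [sum_ite_card, hcount]
  simp_rw [inner]
  rw [← hΩsum]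
  refine Finset.sum_congr rfl fun j hj => ?_
  have hjh : j ≤ h := le_trans (mem_Icc.mp hj).2 hdh
  have hC : ((h.choose j : ℝ)) ≠ 0 := by
    exact_mod_cast (Nat.choose_pos hjh).ne'
  field_simp

lemma sum_colP_dot (dmax : ℕ) (Ω : ℕ → ℝ) (hdh : dmax ≤ h) (v : Fin h → ZMod 2) :
    ∑ c : Fin h → ZMod 2, colP dmax Ω c * (if dotProduct v c ≠ 0 then (1:ℝ) else 0)
      = pl dmax Ω h ((supp v).card) := by
  classical
  set V := supp v with hV
  set l := V.card with hl
  have hlh : l ≤ h := by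
    have := Finset.card_le_univ V
    simpa using this
  have point : ∀ c : Fin h → ZMod 2,
      colP dmax Ω c * (if dotProduct v c ≠ 0 then (1:ℝ) else 0)
        = (if 1 ≤ (supp c).card ∧ (supp c).card ≤ dmax then
            Ω (supp c).card / (h.choose (supp c).card) else 0)
          * (if Odd ((V ∩ supp c).card) then (1:ℝ) else 0) := by
    intro c
    rw [colP_eq_supp]
    congr 1
    exact if_congr (dot_ne_zero_iff v c) rfl rfl
  rw [Fintype.sum_equiv (suppEquiv (h := h))
    (fun c => colP dmax Ω c * (if dotProduct v c ≠ 0 then (1:ℝ) else 0))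
    (fun S => (if 1 ≤ S.card ∧ S.card ≤ dmax then Ω S.card / (h.choose S.card) else 0)
        * (if Odd ((V ∩ S).card) then (1:ℝ) else 0))
    (fun c => point c)]
  have expand : ∀ S : Finset (Fin h),
      (if 1 ≤ S.card ∧ S.card ≤ dmax then Ω S.card / (h.choose S.card) else 0)
          * (if Odd ((V ∩ S).card) then (1:ℝ) else 0)
        = ∑ j ∈ Finset.Icc 1 dmax,
            if S.card = j ∧ Odd ((V ∩ S).card) then Ω j / h.choose j else 0 := by
    intro S
    have : ∀ j, (if S.card = j ∧ Odd ((V ∩ S).card) then Ω j / (h.choose j : ℝ) else 0)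
        = if S.card = j then (if Odd ((V ∩ S).card) then Ω j / (h.choose j : ℝ) else 0)
          else 0 := by
      intro j; split_ifs <;> tauto
    simp_rw [this]
    rw [Finset.sum_ite_eq]
    simp only [mem_Icc]
    split_ifs <;> simp_all
  simp_rw [expand]
  rw [Finset.sum_comm]
  unfold pl
  refine Finset.sum_congr rfl fun j hj => ?_
  obtain ⟨hj1, hj2⟩ := mem_Icc.mp hj
  have hjh : j ≤ h := le_trans hj2 hdh
  rw [sum_ite_card (fun S : Finset (Fin h) => S.card = j ∧ Odd ((V ∩ S).card)), Nval]
  rw [pjl, Finset.mul_sum, Nat.cast_sum, Finset.sum_mul]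
  refine Finset.sum_congr rfl fun i hi => ?_
  obtain ⟨hiIcc, hiOdd⟩ := mem_filter.mp hi
  obtain ⟨hi1, hi2⟩ := mem_Icc.mp hiIcc
  have hil : i ≤ l := le_trans hi2 (min_le_left _ _)
  have hij : i ≤ j := le_trans hi2 (min_le_right _ _)
  have hlj : l + j ≤ h + i := by
    have := le_max_right 1 (l + j - h)
    omega
  have hCj : ((h.choose j : ℝ)) ≠ 0 := by exact_mod_cast (Nat.choose_pos hjh).ne'
  have hCl : ((h.choose l : ℝ)) ≠ 0 := by exact_mod_cast (Nat.choose_pos hlh).ne'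
  have hnat := choose4 (h := h) hlh hjh hil hij hlj
  have hreal : ((h.choose l : ℝ)) * ((l.choose i : ℝ) * ((h - l).choose (j - i) : ℝ))
      = ((h.choose j : ℝ)) * ((j.choose i : ℝ) * ((h - j).choose (l - i) : ℝ)) := by
    exact_mod_cast hnat
  have key : ((l.choose i : ℝ) * ((h - l).choose (j - i) : ℝ)) / (h.choose j : ℝ)
      = ((j.choose i : ℝ) * ((h - j).choose (l - i) : ℝ)) / (h.choose l : ℝ) := by
    rw [div_eq_div_iff hCj hCl]
    linarith [hreal]
  push_cast
  calc ((l.choose i : ℝ) * ((h - l).choose (j - i) : ℝ)) * (Ω j / (h.choose j : ℝ))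
      = Ω j * (((l.choose i : ℝ) * ((h - l).choose (j - i) : ℝ)) / (h.choose j : ℝ)) := by
        ring
    _ = Ω j * (((j.choose i : ℝ) * ((h - j).choose (l - i) : ℝ)) / (h.choose l : ℝ)) := by
        rw [key]
lemma binom {α : Type*} [Fintype α] [DecidableEq α] (f : α → ℝ)
    (hsum : ∑ a : α, f a = 1) (A : Finset α) (n d : ℕ) :
    ∑ c : Fin n → α, (∏ i, f (c i)) *
        (if (univ.filter (fun i => c i ∈ A)).card = d then (1:ℝ) else 0)
      = (n.choose d : ℝ) * (∑ a ∈ A, f a) ^ d * (1 - ∑ a ∈ A, f a) ^ (n - d) := by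
  classical
  set p : ℝ := ∑ a ∈ A, f a with hp
  have hq : ∑ a ∈ Aᶜ, f a = 1 - p := by
    have := Finset.sum_add_sum_compl A f
    rw [hsum] at this
    linarith
  rw [← Finset.sum_fiberwise (g := fun c : Fin n → α => univ.filter (fun i => c i ∈ A))
    (f := fun c => (∏ i, f (c i)) *
        (if (univ.filter (fun i => c i ∈ A)).card = d then (1:ℝ) else 0))]
  have fiber_eq : ∀ S : Finset (Fin n),
      (univ.filter (fun c : Fin n → α => univ.filter (fun i => c i ∈ A) = S))
        = Fintype.piFinset (fun i => if i ∈ S then A else Aᶜ) := by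
    intro S
    ext c
    simp only [mem_filter, mem_univ, true_and, Fintype.mem_piFinset]
    rw [Finset.ext_iff]
    constructor
    · intro hc i
      have := hc i
      simp only [mem_filter, mem_univ, true_and] at this
      by_cases hi : i ∈ S <;> simp [hi, Finset.mem_compl] at this ⊢ <;> tauto
    · intro hc i
      have := hc i
      simp only [mem_filter, mem_univ, true_and]
      by_cases hi : i ∈ S <;> simp [hi, Finset.mem_compl] at this ⊢ <;> tauto
  have inner : ∀ S : Finset (Fin n),
      (∑ c ∈ univ.filter (fun c : Fin n → α => univ.filter (fun i => c i ∈ A) = S),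
        (∏ i, f (c i)) * (if (univ.filter (fun i => c i ∈ A)).card = d then (1:ℝ) else 0))
      = (if S.card = d then (1:ℝ) else 0) * (p ^ S.card * (1 - p) ^ (n - S.card)) := by
    intro S
    have step1 : ∀ c ∈ univ.filter
        (fun c : Fin n → α => univ.filter (fun i => c i ∈ A) = S),
        (∏ i, f (c i)) * (if (univ.filter (fun i => c i ∈ A)).card = d then (1:ℝ) else 0)
          = (if S.card = d then (1:ℝ) else 0) * ∏ i, f (c i) := by
      intro c hc
      simp only [mem_filter, mem_univ, true_and] at hc
      rw [hc, mul_comm]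
    rw [Finset.sum_congr rfl step1, ← Finset.mul_sum]
    congr 1
    rw [fiber_eq S, ← Finset.prod_univ_sum]
    have : ∀ i : Fin n, (∑ a ∈ (if i ∈ S then A else Aᶜ), f a)
        = if i ∈ S then p else 1 - p := by
      intro i; split_ifs <;> simp [hp, hq]
    rw [Finset.prod_congr rfl (fun i _ => this i), Finset.prod_ite, Finset.prod_const,
      Finset.prod_const]
    have h1 : univ.filter (fun i : Fin n => i ∈ S) = S := by ext i; simp
    have h2 : (univ.filter (fun i : Fin n => ¬ i ∈ S)).card = n - S.card := by
      have hc : univ.filter (fun i : Fin n => ¬ i ∈ S) = Sᶜ := by ext i; simp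
      rw [hc, Finset.card_compl, Fintype.card_fin]
    rw [h1, h2]
  rw [Finset.sum_congr rfl (fun S _ => inner S)]
  have final : ∑ S : Finset (Fin n),
      (if S.card = d then (1:ℝ) else 0) * (p ^ S.card * (1 - p) ^ (n - S.card))
      = ∑ S : Finset (Fin n), (if S.card = d then p ^ d * (1 - p) ^ (n - d) else 0) := by
    refine Finset.sum_congr rfl fun S _ => ?_
    by_cases hS : S.card = d <;> simp [hS]
  rw [final, sum_ite_card (fun S : Finset (Fin n) => S.card = d), hcount (h := n) d]
  ring
lemma card_dot_zero (v : Fin h → ZMod 2) (hv : v ≠ 0) :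
    (univ.filter (fun w : Fin h → ZMod 2 => dotProduct w v = 0)).card = 2 ^ (h - 1) := by
  classical
  obtain ⟨j0, hj0⟩ : ∃ j, v j ≠ 0 := by
    by_contra hc
    push_neg at hc
    exact hv (funext fun i => hc i)
  have hv1 : v j0 = 1 := (zmod2_cases (v j0)).resolve_left hj0
  set e : Fin h → ZMod 2 := Pi.single j0 1 with he
  have hee : e + e = 0 := by
    funext i
    have : ∀ x : ZMod 2, x + x = 0 := by decide
    exact this (e i)
  have hdot_e : ∀ w : Fin h → ZMod 2,
      dotProduct (w + e) v = dotProduct w v + 1 := by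
    intro w
    rw [add_dotProduct, he, single_dotProduct, one_mul, hv1]
  have hinv : ∀ w : Fin h → ZMod 2, w + e + e = w := by
    intro w
    rw [add_assoc, hee, add_zero]
  set A := univ.filter (fun w : Fin h → ZMod 2 => dotProduct w v = 0) with hA
  set B := univ.filter (fun w : Fin h → ZMod 2 => dotProduct w v = 1) with hB
  have hAB : A.card = B.card := by
    apply Finset.card_nbij' (i := fun w => w + e) (j := fun w => w + e)
    · intro w hw
      simp only [Finset.mem_coe, hA, hB, mem_filter, mem_univ, true_and] at hw ⊢
      rw [hdot_e, hw, zero_add]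
    · intro w hw
      simp only [Finset.mem_coe, hA, hB, mem_filter, mem_univ, true_and] at hw ⊢
      rw [hdot_e, hw]
      decide
    · intro w _; exact hinv w
    · intro w _; exact hinv w
  have hpart : A.card + B.card = 2 ^ h := by
    have hdisj : Disjoint A B := by
      refine Finset.disjoint_left.mpr fun w hwA hwB => ?_
      simp only [hA, hB, mem_filter, mem_univ, true_and] at hwA hwB
      rw [hwA] at hwB
      exact absurd hwB (by decide)
    have hunion : A ∪ B = univ := by
      ext w
      simp only [hA, hB, Finset.mem_union, mem_filter, mem_univ, true_and, iff_true]
      exact zmod2_cases _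
    have := Finset.card_union_of_disjoint hdisj
    rw [hunion] at this
    have hcard : (univ : Finset (Fin h → ZMod 2)).card = 2 ^ h := by
      rw [Finset.card_univ, Fintype.card_fun, ZMod.card, Fintype.card_fin]
    omega
  have hpos : 0 < h := j0.pos
  have h2 : 2 ^ h = 2 ^ (h - 1) * 2 := by
    rw [← pow_succ]
    congr 1
    omega
  omega

lemma card_mulVec_zero (m : ℕ) (v : Fin h → ZMod 2) (hv : v ≠ 0) :
    (univ.filter (fun H : Matrix (Fin m) (Fin h) (ZMod 2) => Matrix.mulVec H v = 0)).card
      = (2 ^ (h - 1)) ^ m := by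
  classical
  have hset : (univ.filter (fun H : Matrix (Fin m) (Fin h) (ZMod 2) => Matrix.mulVec H v = 0))
      = Fintype.piFinset (fun _ : Fin m =>
          univ.filter (fun w : Fin h → ZMod 2 => dotProduct w v = 0)) := by
    ext H
    simp only [mem_filter, mem_univ, true_and, funext_iff]
    refine Iff.trans ?_ Fintype.mem_piFinset.symm
    simp only [mem_filter, mem_univ, true_and]
    exact Iff.rfl
  rw [hset]
  refine (Fintype.card_piFinset _).trans ?_
  simp [card_dot_zero v hv]

lemma card_wt (l : ℕ) :
    (univ.filter (fun v : Fin h → ZMod 2 => hammingNorm v = l)).card = h.choose l := by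
  classical
  rw [← hcount (h := h) l]
  apply Finset.card_nbij' (i := supp) (j := toVec)
  · intro v hv
    simp only [Finset.mem_coe, mem_filter, mem_univ, true_and] at hv ⊢
    rw [← hN_eq]; exact hv
  · intro S hS
    simp only [Finset.mem_coe, mem_filter, mem_univ, true_and] at hS ⊢
    rw [hN_eq]
    rw [show supp (toVec S) = S from suppEquiv.right_inv S]
    exact hS
  · intro v _; exact suppEquiv.left_inv v
  · intro S _; exact suppEquiv.right_inv S

end more
end helper

/-- Theorem 1: in the fixed-rate Raptor ensemble with parameters `(h,k,n)` (outer
parity-check matrix `H` with i.i.d. uniform entries in `F₂`, independent random LT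
generator matrix `G`), for every `d ≥ 1` the expected number of intermediate words
`v ∈ F₂^h` with `Hv = 0` and `wt(vᵀG) = d` equals
`A_d = C(n,d)·2^{−(h−k)}·Σ_{l=1}^{h} C(h,l)·p_l^d·(1−p_l)^{n−d}`. -/
theorem stmt_3 (dmax h k n : ℕ) (Ω : ℕ → ℝ)
    (hΩpos : ∀ j ∈ Finset.Icc 1 dmax, 0 ≤ Ω j)
    (hΩsum : ∑ j ∈ Finset.Icc 1 dmax, Ω j = 1)
    (hpos : 0 < h) (hkpos : 0 < k) (hnpos : 0 < n) (hkh : k ≤ h) (hdh : dmax ≤ h)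
    (d : ℕ) (hd1 : 1 ≤ d) :
    ∑ H : Matrix (Fin (h - k)) (Fin h) (ZMod 2), ∑ G : Matrix (Fin h) (Fin n) (ZMod 2),
      (((1 / 2 : ℝ) ^ ((h - k) * h) * ∏ i : Fin n, colP dmax Ω (fun r => G r i)) *
        ((Finset.univ.filter (fun v : Fin h → ZMod 2 =>
          Matrix.mulVec H v = 0 ∧ hammingNorm (Matrix.vecMul v G) = d)).card : ℝ)) =
    (n.choose d : ℝ) * (2 : ℝ) ^ (-((h : ℤ) - (k : ℤ))) *
      ∑ l ∈ Finset.Icc 1 h,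
        ((h.choose l : ℝ)) * (pl dmax Ω h l) ^ d * (1 - pl dmax Ω h l) ^ (n - d) := by
  classical
  have cardEq : ∀ (H : Matrix (Fin (h - k)) (Fin h) (ZMod 2))
      (G : Matrix (Fin h) (Fin n) (ZMod 2)),
      ((Finset.univ.filter (fun v : Fin h → ZMod 2 =>
          Matrix.mulVec H v = 0 ∧ hammingNorm (Matrix.vecMul v G) = d)).card : ℝ)
        = ∑ v : Fin h → ZMod 2, (if Matrix.mulVec H v = 0 then (1:ℝ) else 0) *
            (if hammingNorm (Matrix.vecMul v G) = d then (1:ℝ) else 0) := by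
    intro H G
    rw [Finset.card_filter]
    push_cast
    refine Finset.sum_congr rfl fun v _ => ?_
    by_cases h1 : Matrix.mulVec H v = 0 <;>
      by_cases h2 : hammingNorm (Matrix.vecMul v G) = d <;> simp [h1, h2]
  have Gzero : (∑ G : Matrix (Fin h) (Fin n) (ZMod 2),
      (∏ i : Fin n, colP dmax Ω (fun r => G r i)) *
        (if hammingNorm (Matrix.vecMul (0 : Fin h → ZMod 2) G) = d then (1:ℝ) else 0)) = 0 := by
    refine Finset.sum_eq_zero fun G _ => ?_
    rw [Matrix.zero_vecMul, hammingNorm_zero]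
    have hne : ¬ ((0:ℕ) = d) := by omega
    simp [hne]
  have Hsum : ∀ v : Fin h → ZMod 2, v ≠ 0 →
      (∑ H : Matrix (Fin (h - k)) (Fin h) (ZMod 2),
        (1/2:ℝ) ^ ((h - k) * h) * (if Matrix.mulVec H v = 0 then (1:ℝ) else 0))
      = (2:ℝ) ^ (-((h : ℤ) - (k : ℤ))) := by
    intro v hv
    rw [← Finset.mul_sum,
      sum_ite_card (fun H : Matrix (Fin (h - k)) (Fin h) (ZMod 2) => Matrix.mulVec H v = 0),
      card_mulVec_zero (h - k) v hv]
    have hexp : (h - k) * h = (h - 1) * (h - k) + (h - k) := by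
      have e : h - 1 + 1 = h := by omega
      calc (h - k) * h = h * (h - k) := Nat.mul_comm _ _
        _ = (h - 1 + 1) * (h - k) := by rw [e]
        _ = (h - 1) * (h - k) + (h - k) := by ring
    have hrhs : (2:ℝ) ^ (-((h : ℤ) - (k : ℤ))) = ((2:ℝ) ^ (h - k))⁻¹ := by
      rw [zpow_neg, show (h:ℤ) - (k:ℤ) = ((h - k : ℕ) : ℤ) by omega, zpow_natCast]
    rw [hrhs]
    push_cast
    rw [← pow_mul, one_div, inv_pow, hexp, pow_add, mul_one, mul_inv]
    rw [mul_comm ((2:ℝ) ^ ((h-1)*(h-k)))⁻¹, mul_assoc, inv_mul_cancel₀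
      (pow_ne_zero _ (two_ne_zero)), mul_one]
  have Gsum : ∀ v : Fin h → ZMod 2,
      (∑ G : Matrix (Fin h) (Fin n) (ZMod 2),
        (∏ i : Fin n, colP dmax Ω (fun r => G r i)) *
          (if hammingNorm (Matrix.vecMul v G) = d then (1:ℝ) else 0))
      = (n.choose d : ℝ) * (pl dmax Ω h (hammingNorm v)) ^ d *
          (1 - pl dmax Ω h (hammingNorm v)) ^ (n - d) := by
    intro v
    set A : Finset (Fin h → ZMod 2) :=
      univ.filter (fun a => dotProduct v a ≠ 0) with hA
    have hpA : ∑ a ∈ A, colP dmax Ω a = pl dmax Ω h (hammingNorm v) := by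
      rw [hN_eq, ← sum_colP_dot dmax Ω hdh v, hA, Finset.sum_filter]
      refine Finset.sum_congr rfl fun a _ => ?_
      split_ifs <;> simp
    calc (∑ G : Matrix (Fin h) (Fin n) (ZMod 2),
          (∏ i : Fin n, colP dmax Ω (fun r => G r i)) *
            (if hammingNorm (Matrix.vecMul v G) = d then (1:ℝ) else 0))
        = ∑ c : Fin n → (Fin h → ZMod 2),
            (∏ i : Fin n, colP dmax Ω (c i)) *
              (if (univ.filter (fun i => c i ∈ A)).card = d then (1:ℝ) else 0) := by
          refine Fintype.sum_equiv
            ⟨fun G i r => G r i, fun C r i => C i r, fun _ => rfl, fun _ => rfl⟩ _ _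
            fun G => ?_
          congr 1
          have hwt : hammingNorm (Matrix.vecMul v G)
              = (univ.filter (fun i : Fin n => (fun r => G r i) ∈ A)).card := by
            show (univ.filter (fun i : Fin n => Matrix.vecMul v G i ≠ 0)).card = _
            congr 1
            ext i
            simp only [hA, mem_filter, mem_univ, true_and]
            exact Iff.rfl
          rw [hwt]
          rfl
      _ = (n.choose d : ℝ) * (∑ a ∈ A, colP dmax Ω a) ^ d *
            (1 - ∑ a ∈ A, colP dmax Ω a) ^ (n - d) :=
          binom (colP dmax Ω) (sum_colP_one dmax Ω hΩsum hdh) A n d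
      _ = (n.choose d : ℝ) * (pl dmax Ω h (hammingNorm v)) ^ d *
            (1 - pl dmax Ω h (hammingNorm v)) ^ (n - d) := by rw [hpA]
  calc ∑ H : Matrix (Fin (h - k)) (Fin h) (ZMod 2), ∑ G : Matrix (Fin h) (Fin n) (ZMod 2),
      (((1 / 2 : ℝ) ^ ((h - k) * h) * ∏ i : Fin n, colP dmax Ω (fun r => G r i)) *
        ((Finset.univ.filter (fun v : Fin h → ZMod 2 =>
          Matrix.mulVec H v = 0 ∧ hammingNorm (Matrix.vecMul v G) = d)).card : ℝ))
      = ∑ H : Matrix (Fin (h - k)) (Fin h) (ZMod 2), ∑ G : Matrix (Fin h) (Fin n) (ZMod 2),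
          ∑ v : Fin h → ZMod 2,
          ((1/2:ℝ) ^ ((h - k) * h) * (if Matrix.mulVec H v = 0 then (1:ℝ) else 0)) *
            ((∏ i : Fin n, colP dmax Ω (fun r => G r i)) *
              (if hammingNorm (Matrix.vecMul v G) = d then (1:ℝ) else 0)) := by
        refine Finset.sum_congr rfl fun H _ => Finset.sum_congr rfl fun G _ => ?_
        rw [cardEq H G, Finset.mul_sum]
        exact Finset.sum_congr rfl fun v _ => by ring
    _ = ∑ H : Matrix (Fin (h - k)) (Fin h) (ZMod 2), ∑ v : Fin h → ZMod 2,
          ∑ G : Matrix (Fin h) (Fin n) (ZMod 2),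
          ((1/2:ℝ) ^ ((h - k) * h) * (if Matrix.mulVec H v = 0 then (1:ℝ) else 0)) *
            ((∏ i : Fin n, colP dmax Ω (fun r => G r i)) *
              (if hammingNorm (Matrix.vecMul v G) = d then (1:ℝ) else 0)) :=
        Finset.sum_congr rfl fun H _ => Finset.sum_comm
    _ = ∑ v : Fin h → ZMod 2, ∑ H : Matrix (Fin (h - k)) (Fin h) (ZMod 2),
          ∑ G : Matrix (Fin h) (Fin n) (ZMod 2),
          ((1/2:ℝ) ^ ((h - k) * h) * (if Matrix.mulVec H v = 0 then (1:ℝ) else 0)) *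
            ((∏ i : Fin n, colP dmax Ω (fun r => G r i)) *
              (if hammingNorm (Matrix.vecMul v G) = d then (1:ℝ) else 0)) :=
        Finset.sum_comm
    _ = ∑ v : Fin h → ZMod 2,
          (∑ H : Matrix (Fin (h - k)) (Fin h) (ZMod 2),
            (1/2:ℝ) ^ ((h - k) * h) * (if Matrix.mulVec H v = 0 then (1:ℝ) else 0)) *
          (∑ G : Matrix (Fin h) (Fin n) (ZMod 2),
            (∏ i : Fin n, colP dmax Ω (fun r => G r i)) *
              (if hammingNorm (Matrix.vecMul v G) = d then (1:ℝ) else 0)) :=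
        Finset.sum_congr rfl fun v _ => (Finset.sum_mul_sum _ _ _ _).symm
    _ = ∑ v ∈ univ.filter (fun v : Fin h → ZMod 2 => v ≠ 0),
          (2:ℝ) ^ (-((h : ℤ) - (k : ℤ))) *
            ((n.choose d : ℝ) * (pl dmax Ω h (hammingNorm v)) ^ d *
              (1 - pl dmax Ω h (hammingNorm v)) ^ (n - d)) := by
        rw [← Finset.sum_filter_add_sum_filter_not univ (fun v : Fin h → ZMod 2 => v ≠ 0)]
        have right0 : (∑ v ∈ univ.filter (fun v : Fin h → ZMod 2 => ¬ v ≠ 0),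
            (∑ H : Matrix (Fin (h - k)) (Fin h) (ZMod 2),
              (1/2:ℝ) ^ ((h - k) * h) * (if Matrix.mulVec H v = 0 then (1:ℝ) else 0)) *
            (∑ G : Matrix (Fin h) (Fin n) (ZMod 2),
              (∏ i : Fin n, colP dmax Ω (fun r => G r i)) *
                (if hammingNorm (Matrix.vecMul v G) = d then (1:ℝ) else 0))) = 0 := by
          refine Finset.sum_eq_zero fun v hv => ?_
          have hv0 : v = 0 := by
            have := (mem_filter.mp hv).2
            simpa using this
          rw [hv0, Gzero, mul_zero]
        rw [right0, add_zero]
        refine Finset.sum_congr rfl fun v hv => ?_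
        have hv' : v ≠ 0 := (mem_filter.mp hv).2
        rw [Hsum v hv', Gsum v]
    _ = ∑ l ∈ Finset.Icc 1 h, ((h.choose l : ℝ)) *
          ((2:ℝ) ^ (-((h : ℤ) - (k : ℤ))) *
            ((n.choose d : ℝ) * (pl dmax Ω h l) ^ d * (1 - pl dmax Ω h l) ^ (n - d))) := by
        have hmaps : ∀ v ∈ univ.filter (fun v : Fin h → ZMod 2 => v ≠ 0),
            hammingNorm v ∈ Finset.Icc 1 h := by
          intro v hv
          have hne : v ≠ 0 := (mem_filter.mp hv).2
          have h0 : hammingNorm v ≠ 0 := fun hc => hne (hammingNorm_eq_zero.mp hc)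
          have hle : hammingNorm v ≤ h := by
            rw [hN_eq]
            have := Finset.card_le_univ (supp v)
            simpa using this
          rw [mem_Icc]
          omega
        rw [← Finset.sum_fiberwise_of_maps_to hmaps]
        refine Finset.sum_congr rfl fun l hl => ?_
        · 
          obtain ⟨hl1, hl2⟩ := mem_Icc.mp hl
          have hfib : (univ.filter (fun v : Fin h → ZMod 2 => v ≠ 0)).filter
              (fun v => hammingNorm v = l)
              = univ.filter (fun v : Fin h → ZMod 2 => hammingNorm v = l) := by
            rw [Finset.filter_filter]
            refine Finset.filter_congr fun v _ => ?_
            constructor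
            · rintro ⟨_, hw⟩; exact hw
            · intro hw
              refine ⟨?_, hw⟩
              intro h0
              rw [h0, hammingNorm_zero] at hw
              omega
          have hconst : ∀ v ∈ (univ.filter (fun v : Fin h → ZMod 2 => v ≠ 0)).filter
              (fun v => hammingNorm v = l),
              (2:ℝ) ^ (-((h : ℤ) - (k : ℤ))) *
                ((n.choose d : ℝ) * (pl dmax Ω h (hammingNorm v)) ^ d *
                  (1 - pl dmax Ω h (hammingNorm v)) ^ (n - d))
              = (2:ℝ) ^ (-((h : ℤ) - (k : ℤ))) *
                ((n.choose d : ℝ) * (pl dmax Ω h l) ^ d * (1 - pl dmax Ω h l) ^ (n - d)) := by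
            intro v hv
            rw [(mem_filter.mp hv).2]
          rw [Finset.sum_congr rfl hconst, Finset.sum_const, hfib, card_wt l,
            nsmul_eq_mul]
    _ = (n.choose d : ℝ) * (2 : ℝ) ^ (-((h : ℤ) - (k : ℤ))) *
          ∑ l ∈ Finset.Icc 1 h,
            ((h.choose l : ℝ)) * (pl dmax Ω h l) ^ d * (1 - pl dmax Ω h l) ^ (n - d) := by
        rw [Finset.mul_sum]
        exact Finset.sum_congr rfl fun l _ => by ring
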